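/- The sequence x defined by x_k = 5 if k is a perfect square, x_k = 0 if k is even and not a perfect square, and x_k = 1 if k is odd and not a perfect square, is not statistically convergent, but F(x) = 1/2 for every Banach statistical limit functional F (i.e., x is GAS convergent to 1/2). -/

import Mathlib

open Filter

open scoped Classical in
/-- The sequence of partial densities of `P ⊆ ℕ`. -/
noncomputable def densSeq (P : Set ℕ) (n : ℕ) : ℝ :=
  (((Finset.range n).filter (fun k => k ∈ P)).card : ℝ) / n

/-- `P` has natural density `d`. -/
def HasDensity (P : Set ℕ) (d : ℝ) : Prop :=
  Tendsto (densSeq P) atTop (nhds d)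

/-- Statistical convergence of a real sequence to `l`. -/
def StatTendsto (x : ℕ → ℝ) (l : ℝ) : Prop :=
  ∀ ε : ℝ, 0 < ε → HasDensity {n | |x n - l| > ε} 0

/-- The space `l∞` of bounded real sequences with sup norm. -/
noncomputable abbrev Linf := lp (fun _ : ℕ => ℝ) ⊤

/-- `F` is a Banach statistical limit functional on `l∞`. -/
def IsBSL (F : Linf →L[ℝ] ℝ) : Prop :=
  ‖F‖ = 1 ∧
  (∀ (x : Linf) (l : ℝ), StatTendsto (fun n => x n) l → F x = l) ∧
  (∀ s : Linf, HasDensity {n | ¬ 0 ≤ s n} 0 → 0 ≤ F s) ∧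
  (∀ T : Linf → Linf,
    (∀ x : Linf, HasDensity {k | T x k ≠ x (k + 1)} 0) → ∀ x : Linf, F x = F (T x))

open scoped Classical in
/-- The sequence with value 5 on perfect squares, 0 on other even indices and 1 on
other odd indices. -/
noncomputable def xseq : ℕ → ℝ := fun k =>
  if ∃ m, m * m = k then 5 else if Even k then 0 else 1

lemma xseq_memℓp : Memℓp xseq ⊤ := by
  apply memℓp_infty
  refine ⟨5, ?_⟩
  rintro r ⟨k, rfl⟩
  simp only [xseq, Real.norm_eq_abs]
  split_ifs <;> simp

/-- `xseq` as an element of `l∞`. -/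
noncomputable def xLinf : Linf := ⟨xseq, xseq_memℓp⟩

open scoped Classical

lemma densSeq_eq (P : Set ℕ) [inst : DecidablePred (· ∈ P)] (n : ℕ) :
    densSeq P n = (((Finset.range n).filter (fun k => k ∈ P)).card : ℝ) / n := by
  unfold densSeq
  have : (fun a => Classical.propDecidable (a ∈ P)) = inst := Subsingleton.elim _ _
  rw [this]

lemma densSeq_nonneg (P : Set ℕ) (n : ℕ) : 0 ≤ densSeq P n := by
  unfold densSeq; positivity

lemma densSeq_mono {A B : Set ℕ} (h : A ⊆ B) (n : ℕ) : densSeq A n ≤ densSeq B n := by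
  unfold densSeq
  rcases Nat.eq_zero_or_pos n with rfl | hn
  · simp
  gcongr

lemma densSeq_union_le (A B : Set ℕ) (n : ℕ) :
    densSeq (A ∪ B) n ≤ densSeq A n + densSeq B n := by
  unfold densSeq
  rw [← add_div]
  gcongr ?_ / _
  have hsub : (Finset.range n).filter (fun k => k ∈ A ∪ B) ⊆
      (Finset.range n).filter (fun k => k ∈ A) ∪ (Finset.range n).filter (fun k => k ∈ B) := by
    intro k hk
    simp only [Finset.mem_filter, Finset.mem_union, Set.mem_union] at hk ⊢
    tauto
  have := (Finset.card_le_card hsub).trans (Finset.card_union_le _ _)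
  have h2 : ((Finset.filter (fun k => k ∈ A ∪ B) (Finset.range n)).card : ℝ) ≤
      ((Finset.filter (fun k => k ∈ A) (Finset.range n)).card : ℝ) +
      ((Finset.filter (fun k => k ∈ B) (Finset.range n)).card : ℝ) := by exact_mod_cast this
  convert h2 using 4
  rfl

lemma hasDensity_zero_mono {A B : Set ℕ} (h : A ⊆ B) (hB : HasDensity B 0) :
    HasDensity A 0 :=
  squeeze_zero (densSeq_nonneg A) (densSeq_mono h) hB

lemma hasDensity_zero_union {A B : Set ℕ} (hA : HasDensity A 0) (hB : HasDensity B 0) :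
    HasDensity (A ∪ B) 0 :=
  squeeze_zero (densSeq_nonneg _) (densSeq_union_le A B) (by simpa using hA.add hB)

lemma tendsto_sqrt_add_div (C : ℝ) :
    Tendsto (fun n : ℕ => (Real.sqrt n + C) / n) atTop (nhds 0) := by
  have hs : Tendsto (fun n : ℕ => Real.sqrt n) atTop atTop := by
    have h1 : Tendsto (fun x : ℝ => x ^ (1/2 : ℝ)) atTop atTop :=
      tendsto_rpow_atTop (by norm_num)
    have := h1.comp tendsto_natCast_atTop_atTop (α := ℕ)
    apply this.congr
    intro n
    simp [Real.rpow_natCast, Real.sqrt_eq_rpow]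
  have h1 : Tendsto (fun n : ℕ => Real.sqrt n / n) atTop (nhds 0) := by
    have hinv := hs.inv_tendsto_atTop
    apply hinv.congr'
    filter_upwards [eventually_ge_atTop 1] with n hn
    have hn0 : (0:ℝ) < Real.sqrt n := Real.sqrt_pos.mpr (by exact_mod_cast hn)
    have : (n : ℝ) = Real.sqrt n * Real.sqrt n := (Real.mul_self_sqrt (by positivity)).symm
    rw [Pi.inv_apply, this]
    field_simp
    rw [Real.sqrt_sq hn0.le]
  have h2 := tendsto_const_div_atTop_nhds_zero_nat C
  have := h1.add h2
  simpa [add_div] using this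

lemma card_sq_filter (j n : ℕ) :
    ((Finset.range n).filter (fun k => k ∈ {k : ℕ | ∃ m, m * m = k + j})).card
      ≤ Nat.sqrt (n + j) + 1 := by
  have := Finset.card_le_card_of_injOn (s := (Finset.range n).filter
      (fun k => k ∈ {k : ℕ | ∃ m, m * m = k + j})) (t := Finset.range (Nat.sqrt (n + j) + 1))
      (fun k => Nat.sqrt (k + j)) ?_ ?_
  · simpa using this
  · intro k hk
    simp only [Finset.mem_coe, Finset.mem_filter, Finset.mem_range, Set.mem_setOf_eq] at hk ⊢
    exact Nat.lt_succ_of_le (Nat.sqrt_le_sqrt (show k + j ≤ n + j by omega))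
  · intro a ha b hb hab
    simp only [Finset.coe_filter, Set.mem_setOf_eq, Finset.mem_range] at ha hb
    obtain ⟨-, ma, hma⟩ := ha
    obtain ⟨-, mb, hmb⟩ := hb
    have h1 : Nat.sqrt (a + j) = ma := by rw [← hma]; exact Nat.sqrt_eq ma
    have h2 : Nat.sqrt (b + j) = mb := by rw [← hmb]; exact Nat.sqrt_eq mb
    simp only at hab
    rw [h1, h2] at hab
    subst hab
    omega

lemma hasDensity_sq (j : ℕ) : HasDensity {k : ℕ | ∃ m, m * m = k + j} 0 := by
  apply squeeze_zero (densSeq_nonneg _) (g := fun n : ℕ => (Real.sqrt n + (j + 2)) / n)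
  · intro n
    unfold densSeq
    gcongr ?_ / _
    have h1 : (((Finset.range n).filter
        (fun k => k ∈ {k : ℕ | ∃ m, m * m = k + j})).card : ℝ) ≤ (Nat.sqrt (n + j) : ℝ) + 1 := by
      exact_mod_cast card_sq_filter j n
    refine h1.trans ?_
    have h2 : (Nat.sqrt (n + j) : ℝ) ≤ Real.sqrt (n + j) := by
      have := Real.nat_sqrt_le_real_sqrt (a := n + j)
      push_cast at this ⊢
      exact this
    have h3 : Real.sqrt (n + j) ≤ Real.sqrt n + j := by
      rw [show Real.sqrt n + (j:ℝ) = Real.sqrt ((Real.sqrt n + j)^2) from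
        (Real.sqrt_sq (by positivity)).symm]
      apply Real.sqrt_le_sqrt
      have hsq : Real.sqrt n ^ 2 = (n : ℝ) := Real.sq_sqrt (by positivity)
      have hj : (j : ℝ) ≤ (j : ℝ)^2 := by
        have hjn : j ≤ j ^ 2 := by nlinarith [Nat.zero_le j, sq_nonneg j]
        exact_mod_cast hjn
      push_cast
      nlinarith [Real.sqrt_nonneg (n : ℝ)]
    push_cast
    nlinarith
  · exact tendsto_sqrt_add_div _

lemma card_even_filter (n : ℕ) :
    ((Finset.range n).filter (fun k => k ∈ {k : ℕ | Even k})).card = (n + 1) / 2 := by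
  induction n with
  | zero => simp
  | succ n ih =>
    rw [Finset.range_add_one, Finset.filter_insert]
    split_ifs with h
    · rw [Finset.card_insert_of_notMem (by simp), ih]
      simp only [Set.mem_setOf_eq] at h
      obtain ⟨m, rfl⟩ := h
      omega
    · rw [ih]
      simp only [Set.mem_setOf_eq] at h
      obtain ⟨m, rfl⟩ := Nat.not_even_iff_odd.mp h
      omega

lemma card_odd_filter (n : ℕ) :
    ((Finset.range n).filter (fun k => k ∈ {k : ℕ | ¬ Even k})).card = n / 2 := by
  have h := Finset.card_filter_add_card_filter_not
    (s := Finset.range n) (p := fun k => k ∈ {k : ℕ | Even k})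
  have he := card_even_filter n
  simp only [Set.mem_setOf_eq, Finset.card_range] at h he ⊢
  omega

lemma tendsto_half {a : ℕ → ℕ} (h : ∀ n : ℕ, ((n:ℤ) - 1 ≤ 2 * (a n : ℤ)) ∧ (2 * (a n : ℤ) ≤ (n : ℤ) + 1)) :
    Tendsto (fun n => (a n : ℝ) / n) atTop (nhds (1/2)) := by
  have hg : Tendsto (fun n : ℕ => ((n:ℝ) - 1) / (2 * n)) atTop (nhds (1/2)) := by
    have h1 : Tendsto (fun n : ℕ => 1/2 - (1/2)/(n:ℝ)) atTop (nhds (1/2)) := by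
      have := (tendsto_const_nhds (x := (1/2:ℝ)) (f := atTop (α := ℕ))).sub
        (tendsto_const_div_atTop_nhds_zero_nat (1/2 : ℝ))
      simpa using this
    apply h1.congr'
    filter_upwards [eventually_ge_atTop 1] with n hn
    have : (0:ℝ) < n := by exact_mod_cast hn
    field_simp
  have hh : Tendsto (fun n : ℕ => ((n:ℝ) + 1) / (2 * n)) atTop (nhds (1/2)) := by
    have h1 : Tendsto (fun n : ℕ => 1/2 + (1/2)/(n:ℝ)) atTop (nhds (1/2)) := by
      have := (tendsto_const_nhds (x := (1/2:ℝ)) (f := atTop (α := ℕ))).add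
        (tendsto_const_div_atTop_nhds_zero_nat (1/2 : ℝ))
      simpa using this
    apply h1.congr'
    filter_upwards [eventually_ge_atTop 1] with n hn
    have : (0:ℝ) < n := by exact_mod_cast hn
    field_simp
  apply tendsto_of_tendsto_of_tendsto_of_le_of_le' hg hh
  · filter_upwards [eventually_ge_atTop 1] with n hn
    have hn0 : (0:ℝ) < n := by exact_mod_cast hn
    rw [div_le_div_iff₀ (by positivity) hn0]
    have := (h n).1
    have : ((n:ℝ) - 1) ≤ 2 * a n := by exact_mod_cast this
    nlinarith
  · filter_upwards [eventually_ge_atTop 1] with n hn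
    have hn0 : (0:ℝ) < n := by exact_mod_cast hn
    rw [div_le_div_iff₀ hn0 (by positivity)]
    have := (h n).2
    have : (2 * (a n) : ℝ) ≤ (n:ℝ) + 1 := by exact_mod_cast this
    nlinarith

lemma hasDensity_even : HasDensity {k : ℕ | Even k} (1/2) := by
  have := tendsto_half (a := fun n => (n+1)/2) (fun n => by refine ⟨?_, ?_⟩ <;> · omega)
  apply this.congr
  intro n
  rw [densSeq_eq, card_even_filter]

lemma hasDensity_odd : HasDensity {k : ℕ | ¬ Even k} (1/2) := by
  have := tendsto_half (a := fun n => n/2) (fun n => by refine ⟨?_, ?_⟩ <;> · omega)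
  apply this.congr
  intro n
  rw [densSeq_eq, card_odd_filter]

lemma hasDensity_empty : HasDensity (∅ : Set ℕ) 0 := by
  have : densSeq (∅ : Set ℕ) = fun _ => 0 := by
    funext n
    unfold densSeq
    simp
  unfold HasDensity
  rw [this]
  exact tendsto_const_nhds

theorem xseq_not_stat_but_GAS :
    (¬ ∃ l : ℝ, StatTendsto xseq l) ∧
    (∀ F : Linf →L[ℝ] ℝ, IsBSL F → F xLinf = 1 / 2) := by
  have hsq0 : HasDensity {k : ℕ | ∃ m, m * m = k} 0 := by
    have := hasDensity_sq 0
    simpa using this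
  constructor
  · rintro ⟨l, hl⟩
    have hB := hl (1/4) (by norm_num)
    by_cases hcase : (1/2 : ℝ) ≤ l
    · have hsub : {k : ℕ | Even k} ⊆
          {n : ℕ | |xseq n - l| > 1/4} ∪ {k : ℕ | ∃ m, m * m = k} := by
        intro k hk
        simp only [Set.mem_setOf_eq, Set.mem_union] at hk ⊢
        by_cases hs : ∃ m, m * m = k
        · right; exact hs
        · left
          have hx : xseq k = 0 := by unfold xseq; rw [if_neg hs, if_pos hk]
          rw [hx, zero_sub, abs_neg, abs_of_nonneg (by linarith)]
          linarith
      have h0 : HasDensity {k : ℕ | Even k} 0 :=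
        hasDensity_zero_mono hsub (hasDensity_zero_union hB hsq0)
      have := tendsto_nhds_unique hasDensity_even h0
      norm_num at this
    · push_neg at hcase
      have hsub : {k : ℕ | ¬ Even k} ⊆
          {n : ℕ | |xseq n - l| > 1/4} ∪ {k : ℕ | ∃ m, m * m = k} := by
        intro k hk
        simp only [Set.mem_setOf_eq, Set.mem_union] at hk ⊢
        by_cases hs : ∃ m, m * m = k
        · right; exact hs
        · left
          have hx : xseq k = 1 := by unfold xseq; rw [if_neg hs, if_neg hk]
          rw [hx, abs_of_nonneg (by linarith)]
          linarith
      have h0 : HasDensity {k : ℕ | ¬ Even k} 0 :=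
        hasDensity_zero_mono hsub (hasDensity_zero_union hB hsq0)
      have := tendsto_nhds_unique hasDensity_odd h0
      norm_num at this
  · intro F hF
    obtain ⟨-, hstat, -, hshift⟩ := hF
    have hmem : ∀ x : Linf, Memℓp (fun k => x (k+1)) ⊤ := by
      intro x
      have hx := lp.memℓp x
      rw [memℓp_infty_iff] at hx ⊢
      exact BddAbove.mono (by rintro r ⟨k, rfl⟩; exact ⟨k+1, rfl⟩) hx
    set T : Linf → Linf := fun x => ⟨fun k => x (k+1), hmem x⟩ with hT
    have hTd : ∀ x : Linf, HasDensity {k | T x k ≠ x (k + 1)} 0 := by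
      intro x
      have hset : {k : ℕ | T x k ≠ x (k + 1)} = ∅ := by
        ext k
        simp only [Set.mem_setOf_eq, Set.mem_empty_iff_false, iff_false, not_not]
        rfl
      rw [hset]
      exact hasDensity_empty
    have h1 : F xLinf = F (T xLinf) := hshift T hTd xLinf
    have hco : ∀ n : ℕ, ((xLinf + T xLinf : Linf) : ℕ → ℝ) n = xseq n + xseq (n + 1) := by
      intro n
      rw [lp.coeFn_add]
      rfl
    have h2 : StatTendsto (fun n => (xLinf + T xLinf : Linf) n) 1 := by
      intro ε hε
      have hsub : {n : ℕ | |(fun n => ((xLinf + T xLinf : Linf) : ℕ → ℝ) n) n - 1| > ε} ⊆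
          {k : ℕ | ∃ m, m * m = k + 0} ∪ {k : ℕ | ∃ m, m * m = k + 1} := by
        intro n hn
        simp only [Set.mem_setOf_eq, Set.mem_union] at hn ⊢
        by_contra hcon
        push_neg at hcon
        obtain ⟨hn0, hn1⟩ := hcon
        have hn0' : ¬ ∃ m, m * m = n := by simpa using hn0
        have hn1' : ¬ ∃ m, m * m = n + 1 := by simpa using hn1
        have hx0 : xseq n + xseq (n + 1) = 1 := by
          unfold xseq
          rw [if_neg hn0', if_neg hn1']
          rcases Nat.even_or_odd n with he | ho
          · rw [if_pos he, if_neg (by simp [Nat.even_add_one, he])]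
            norm_num
          · have hne : ¬ Even n := Nat.not_even_iff_odd.mpr ho
            rw [if_neg hne, if_pos (Nat.even_add_one.mpr hne)]
            norm_num
        rw [hco n, hx0] at hn
        simp at hn
        linarith
      exact hasDensity_zero_mono hsub
        (hasDensity_zero_union (hasDensity_sq 0) (hasDensity_sq 1))
    have h3 := hstat _ 1 h2
    rw [map_add, ← h1] at h3
    linarith
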